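/- Let G = (V,E) be a graph whose vertex set admits a partition into two non-empty sets V1 and V2 such that every vertex of V1 is adjacent to every vertex of V2. Then G is critical if and only if both induced subgraphs G[V1] and G[V2] are critical. -/

import Mathlib

open SimpleGraph

/-- upward: coloring a "join" of two induced parts. -/
lemma join_up {V : Type*} (G : SimpleGraph V) (A B : Set V)
    {a b : ℕ} (ha : (G.induce A).Colorable a) (hb : (G.induce B).Colorable b) :
    (G.induce (A ∪ B)).Colorable (a + b) := by
  classical
  obtain ⟨cA⟩ := ha
  obtain ⟨cB⟩ := hb
  have C : (G.induce (A ∪ B)).Coloring (Fin a ⊕ Fin b) := by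
    refine Coloring.mk
      (fun v => if h : (v : V) ∈ A then Sum.inl (cA ⟨v, h⟩)
        else Sum.inr (cB ⟨v, v.2.resolve_left h⟩)) ?_
    intro u v huv
    by_cases hu : (u : V) ∈ A <;> by_cases hv : (v : V) ∈ A <;>
      simp only [dif_pos, dif_neg, hu, hv] <;> intro hc
    · exact cA.valid (by exact huv) (Sum.inl.inj hc)
    · exact (Sum.inl_ne_inr hc)
    · exact (Sum.inr_ne_inl hc)
    · exact cB.valid (by exact huv) (Sum.inr.inj hc)
  simpa using C.colorable

/-- downward: from a coloring of an induced join, extract colorings of parts. -/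
lemma join_down {V : Type*} (G : SimpleGraph V) (A B : Set V)
    (hjoin : ∀ x ∈ A, ∀ y ∈ B, G.Adj x y)
    {n : ℕ} (h : (G.induce (A ∪ B)).Colorable n) :
    ∃ a b : ℕ, a + b ≤ n ∧ (G.induce A).Colorable a ∧ (G.induce B).Colorable b := by
  classical
  obtain ⟨c⟩ := h
  let s1 : Finset (Fin n) := Finset.univ.filter
    (fun k => ∃ v : ↥(A ∪ B), (v : V) ∈ A ∧ c v = k)
  let s2 : Finset (Fin n) := Finset.univ.filter
    (fun k => ∃ v : ↥(A ∪ B), (v : V) ∈ B ∧ c v = k)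
  have hdisj : Disjoint s1 s2 := by
    rw [Finset.disjoint_left]
    rintro k hk1 hk2
    simp only [s1, s2, Finset.mem_filter, Finset.mem_univ, true_and] at hk1 hk2
    obtain ⟨v1, hv1, e1⟩ := hk1
    obtain ⟨v2, hv2, e2⟩ := hk2
    exact c.valid (by exact hjoin _ hv1 _ hv2) (e1.trans e2.symm)
  have C1 : (G.induce A).Coloring ↥s1 := by
    refine Coloring.mk
      (fun v => ⟨c ⟨v, Or.inl v.2⟩, by
        simp only [s1, Finset.mem_coe, Finset.mem_filter, Finset.mem_univ, true_and]
        exact ⟨⟨v, Or.inl v.2⟩, v.2, rfl⟩⟩) ?_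
    intro u v huv hc
    exact c.valid (by exact huv) (Subtype.ext_iff.mp hc)
  have C2 : (G.induce B).Coloring ↥s2 := by
    refine Coloring.mk
      (fun v => ⟨c ⟨v, Or.inr v.2⟩, by
        simp only [s2, Finset.mem_coe, Finset.mem_filter, Finset.mem_univ, true_and]
        exact ⟨⟨v, Or.inr v.2⟩, v.2, rfl⟩⟩) ?_
    intro u v huv hc
    exact c.valid (by exact huv) (Subtype.ext_iff.mp hc)
  refine ⟨s1.card, s2.card, ?_, ?_, ?_⟩
  · calc s1.card + s2.card = (s1 ∪ s2).card := (Finset.card_union_of_disjoint hdisj).symm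
      _ ≤ Fintype.card (Fin n) := Finset.card_le_univ _
      _ = n := Fintype.card_fin n
  · simpa [Fintype.card_coe] using C1.colorable
  · simpa [Fintype.card_coe] using C2.colorable

/-- induced subgraph of induced subgraph as induced subgraph of the image. -/
lemma induce_induce_colorable_iff {V : Type*} (G : SimpleGraph V) (A : Set V)
    (t : Set ↥A) (n : ℕ) :
    ((G.induce A).induce t).Colorable n ↔ (G.induce (Subtype.val '' t)).Colorable n := by
  have e : ((G.induce A).induce t) ≃g (G.induce (Subtype.val '' t)) := by
    refine ⟨Equiv.Set.image Subtype.val t Subtype.val_injective, ?_⟩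
    intro x y
    simp [Equiv.Set.image_apply, SimpleGraph.comap]
  exact ⟨fun h => Colorable.of_hom e.symm.toEmbedding.toHom h, fun h => Colorable.of_hom e.toEmbedding.toHom h⟩






/-- A graph is `k`-critical if its chromatic number equals `k` and every proper
induced subgraph is `(k-1)`-colorable. -/
def IsKCritical {V : Type*} (G : SimpleGraph V) (k : ℕ) : Prop :=
  G.chromaticNumber = k ∧ ∀ s : Set V, s ≠ Set.univ → (G.induce s).Colorable (k - 1)

/-- A set `X` of vertices is a module if every vertex outside `X` is adjacent
either to all vertices of `X` or to none of them. -/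
def IsModule {V : Type*} (G : SimpleGraph V) (X : Set V) : Prop :=
  ∀ v ∉ X, (∀ x ∈ X, G.Adj v x) ∨ (∀ x ∈ X, ¬ G.Adj v x)

/-- `G` contains no induced subgraph isomorphic to `H`. -/
def InducedFree {V W : Type*} (G : SimpleGraph V) (H : SimpleGraph W) : Prop :=
  ¬ ∃ s : Set V, Nonempty ((G.induce s) ≃g H)

/-- `G` is (P5, P5-bar)-free. -/
def P5P5barFree {V : Type*} (G : SimpleGraph V) : Prop :=
  InducedFree G (pathGraph 5) ∧ InducedFree G (pathGraph 5)ᶜ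

/-- A buoy in `G` given by its five non-empty bags. -/
structure IsBuoy {V : Type*} (G : SimpleGraph V) (B : Fin 5 → Set V) : Prop where
  nonempty : ∀ i, (B i).Nonempty
  disjoint : ∀ i j, i ≠ j → Disjoint (B i) (B j)
  adj_next : ∀ i, ∀ x ∈ B i, ∀ y ∈ B (i + 1), G.Adj x y
  not_adj_skip : ∀ i, ∀ x ∈ B i, ∀ y ∈ B (i + 2), ¬ G.Adj x y

/-- `G` is a pseudo-buoy with (possibly empty) bags `B 0, …, B 4` partitioning
its vertex set. -/
structure IsPseudoBuoy {V : Type*} (G : SimpleGraph V) (B : Fin 5 → Set V) : Prop where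
  cover : (⋃ i, B i) = Set.univ
  disjoint : ∀ i j, i ≠ j → Disjoint (B i) (B j)
  adj_next : ∀ i, ∀ x ∈ B i, ∀ y ∈ B (i + 1), G.Adj x y
  not_adj_skip : ∀ i, ∀ x ∈ B i, ∀ y ∈ B (i + 2), ¬ G.Adj x y

/-- The graph obtained from `G` by substituting `H` for the module `M`. -/
def substitute {V W : Type*} (G : SimpleGraph V) (M : Set V) (H : SimpleGraph W) :
    SimpleGraph ({v : V // v ∉ M} ⊕ W) where
  Adj x y :=
    match x, y with
    | Sum.inl a, Sum.inl b => G.Adj a b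
    | Sum.inl a, Sum.inr _ => ∃ m ∈ M, G.Adj a m
    | Sum.inr _, Sum.inl b => ∃ m ∈ M, G.Adj b m
    | Sum.inr a, Sum.inr b => H.Adj a b
  symm := by
    refine ⟨?_⟩
    rintro (a | a) (b | b) h
    · exact G.adj_symm h
    · exact h
    · exact h
    · exact H.adj_symm h
  loopless := by
    refine ⟨?_⟩
    rintro (a | a) h
    · exact G.irrefl h
    · exact H.irrefl h

/-- The join of two graphs. -/
def joinGraph {V W : Type*} (G : SimpleGraph V) (H : SimpleGraph W) :
    SimpleGraph (V ⊕ W) where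
  Adj x y :=
    match x, y with
    | Sum.inl a, Sum.inl b => G.Adj a b
    | Sum.inl _, Sum.inr _ => True
    | Sum.inr _, Sum.inl _ => True
    | Sum.inr a, Sum.inr b => H.Adj a b
  symm := by
    refine ⟨?_⟩
    rintro (a | a) (b | b) h
    · exact G.adj_symm h
    · trivial
    · trivial
    · exact H.adj_symm h
  loopless := by
    refine ⟨?_⟩
    rintro (a | a) h
    · exact G.irrefl h
    · exact H.irrefl h


lemma forward_part {V : Type*} [Fintype V] (G : SimpleGraph V) (A B : Set V)
    (hdisj : Disjoint A B) (hjoin : ∀ x ∈ A, ∀ y ∈ B, G.Adj x y)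
    {nA nB k : ℕ}
    (hχB : (G.induce B).chromaticNumber = nB)
    (h1A : 1 ≤ nA) (hk : k = nA + nB)
    (hs : ∀ s : Set V, s ≠ Set.univ → (G.induce s).Colorable (k - 1)) :
    ∀ t : Set ↥A, t ≠ Set.univ → ((G.induce A).induce t).Colorable (nA - 1) := by
  intro t ht
  obtain ⟨x, hx⟩ := (Set.ne_univ_iff_exists_notMem t).mp ht
  have hs' : (Subtype.val '' t) ∪ B ≠ Set.univ := by
    rw [Set.ne_univ_iff_exists_notMem]
    refine ⟨x, ?_⟩
    rintro (⟨y, hy, hyx⟩ | hxB)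
    · exact hx (Subtype.val_injective hyx ▸ hy)
    · exact (Set.disjoint_left.mp hdisj x.2) hxB
  obtain ⟨a, b, hab, ha, hb⟩ := join_down G (Subtype.val '' t) B
    (by rintro x ⟨y, hy, rfl⟩ z hz; exact hjoin _ y.2 _ hz) (hs _ hs')
  have hbB : nB ≤ b := by
    have := hb.chromaticNumber_le
    rw [hχB] at this
    exact_mod_cast this
  exact ((induce_induce_colorable_iff G A t a).mpr ha).mono (by omega)

lemma backward_case {V : Type*} [Fintype V] (G : SimpleGraph V) (A B : Set V)
    {kA kB : ℕ}
    (hsA : ∀ t : Set ↥A, t ≠ Set.univ → ((G.induce A).induce t).Colorable (kA - 1))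
    (hB : (G.induce B).Colorable kB)
    (s : Set V) (v : V) (hv : v ∈ A) (hvs : v ∉ s) (hcov : A ∪ B = Set.univ) :
    (G.induce s).Colorable ((kA - 1) + kB) := by
  set t : Set ↥A := Subtype.val ⁻¹' s with htdef
  have ht : t ≠ Set.univ := by
    rw [Set.ne_univ_iff_exists_notMem]
    exact ⟨⟨v, hv⟩, hvs⟩
  have hA' : (G.induce (Subtype.val '' t)).Colorable (kA - 1) :=
    (induce_induce_colorable_iff G A t _).mp (hsA t ht)
  have himg : Subtype.val '' t = A ∩ s := Subtype.image_preimage_val A s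
  rw [himg] at hA'
  have hB' : (G.induce (B ∩ s)).Colorable kB := by
    obtain ⟨cB⟩ := hB
    exact ⟨SimpleGraph.Coloring.mk (fun x => cB ⟨x, x.2.1⟩)
      (fun {x y} hxy hc => cB.valid (by exact hxy) hc)⟩
  have := join_up G (A ∩ s) (B ∩ s) hA' hB'
  have hu : (A ∩ s) ∪ (B ∩ s) = s := by
    rw [← Set.union_inter_distrib_right, hcov, Set.univ_inter]
  rwa [hu] at this

/-- A graph which is the join of two non-empty parts is critical iff both
parts induce critical graphs. -/
theorem join_critical_iff {V : Type*} [Fintype V]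
    (G : SimpleGraph V) (V1 V2 : Set V)
    (h1 : V1.Nonempty) (h2 : V2.Nonempty)
    (hdisj : Disjoint V1 V2) (hcover : V1 ∪ V2 = Set.univ)
    (hjoin : ∀ x ∈ V1, ∀ y ∈ V2, G.Adj x y) :
    (∃ k : ℕ, IsKCritical G k) ↔
      ((∃ k1 : ℕ, IsKCritical (G.induce V1) k1) ∧
       (∃ k2 : ℕ, IsKCritical (G.induce V2) k2)) := by
  classical
  have hne1 : Nonempty ↥V1 := h1.to_subtype
  have hne2 : Nonempty ↥V2 := h2.to_subtype
  set n1 := (G.induce V1).chromaticNumber.toNat with hn1def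
  set n2 := (G.induce V2).chromaticNumber.toNat with hn2def
  have hc1 : (G.induce V1).Colorable n1 := colorable_chromaticNumber_of_fintype _
  have hc2 : (G.induce V2).Colorable n2 := colorable_chromaticNumber_of_fintype _
  have hχ1 : (G.induce V1).chromaticNumber = n1 := by
    refine (ENat.coe_toNat ?_).symm
    exact chromaticNumber_ne_top_iff_exists.mpr ⟨_, colorable_of_fintype _⟩
  have hχ2 : (G.induce V2).chromaticNumber = n2 := by
    refine (ENat.coe_toNat ?_).symm
    exact chromaticNumber_ne_top_iff_exists.mpr ⟨_, colorable_of_fintype _⟩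
  have h1pos : 1 ≤ n1 := by
    have := chromaticNumber_pos hc1
    rw [hχ1] at this
    exact_mod_cast this
  have h2pos : 1 ≤ n2 := by
    have := chromaticNumber_pos hc2
    rw [hχ2] at this
    exact_mod_cast this
  have hGcol : ∀ m : ℕ, (G.induce (V1 ∪ V2)).Colorable m ↔ G.Colorable m := by
    intro m
    rw [hcover]
    exact ⟨fun h => Colorable.of_hom (induceUnivIso G).symm.toEmbedding.toHom h,
      fun h => Colorable.of_hom (induceUnivIso G).toEmbedding.toHom h⟩
  have hχG : G.chromaticNumber = (↑(n1 + n2) : ℕ∞) := by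
    refine le_antisymm (((hGcol _).mp (join_up G V1 V2 hc1 hc2)).chromaticNumber_le) ?_
    set m := G.chromaticNumber.toNat with hmdef
    have hGm : G.Colorable m := colorable_chromaticNumber_of_fintype _
    have hχGm : G.chromaticNumber = (m : ℕ∞) := by
      refine (ENat.coe_toNat ?_).symm
      exact chromaticNumber_ne_top_iff_exists.mpr ⟨_, colorable_of_fintype _⟩
    obtain ⟨a, b, hab, ha, hb⟩ := join_down G V1 V2 hjoin ((hGcol m).mpr hGm)
    have ha1 : n1 ≤ a := by
      have := ha.chromaticNumber_le; rw [hχ1] at this; exact_mod_cast this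
    have hb2 : n2 ≤ b := by
      have := hb.chromaticNumber_le; rw [hχ2] at this; exact_mod_cast this
    rw [hχGm]
    exact_mod_cast (by omega : n1 + n2 ≤ m)
  constructor
  · rintro ⟨k, hχ, hs⟩
    have hk : k = n1 + n2 := by
      have := hχ.symm.trans hχG
      exact_mod_cast this
    refine ⟨⟨n1, hχ1, forward_part G V1 V2 hdisj hjoin hχ2 h1pos hk hs⟩,
           ⟨n2, hχ2, forward_part G V2 V1 hdisj.symm
             (fun x hx y hy => (hjoin y hy x hx).symm) hχ1 h2pos (by omega) hs⟩⟩
  · rintro ⟨⟨k1, hχ1', hs1⟩, ⟨k2, hχ2', hs2⟩⟩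
    have hk1 : k1 = n1 := by
      have := hχ1'.symm.trans hχ1; exact_mod_cast this
    have hk2 : k2 = n2 := by
      have := hχ2'.symm.trans hχ2; exact_mod_cast this
    refine ⟨k1 + k2, by rw [hχG, hk1, hk2], ?_⟩
    intro s hsu
    obtain ⟨v, hv⟩ := (Set.ne_univ_iff_exists_notMem s).mp hsu
    have hv12 : v ∈ V1 ∨ v ∈ V2 := by
      have : v ∈ V1 ∪ V2 := hcover ▸ Set.mem_univ v
      exact this
    rcases hv12 with hv1 | hv2
    · exact (backward_case G V1 V2 hs1 (hk2 ▸ hc2) s v hv1 hv hcover).mono (by omega)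
    · exact (backward_case G V2 V1 hs2 (hk1 ▸ hc1) s v hv2 hv
        (Set.union_comm V2 V1 ▸ hcover)).mono (by omega)
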